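/- Let R be a commutative Noetherian ring and I ⊆ R an ideal, and let M be a finitely generated R-module. Then the I-adic completion of M is naturally isomorphic to (I-adic completion of R) ⊗_R M; in particular the I-adic completion of R is flat as an R-module. -/

import Mathlib

open TensorProduct

/-- Let `R` be a commutative Noetherian ring, `I ⊆ R` an ideal, and `M` a finitely
generated `R`-module. Then the `I`-adic completion of `M` is isomorphic to
`(I-adic completion of R) ⊗_R M`; in particular the `I`-adic completion of `R` is flat
as an `R`-module. -/
theorem adicCompletion_tensor_and_flat
    (R : Type*) [CommRing R] [IsNoetherianRing R] (I : Ideal R)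
    (M : Type*) [AddCommGroup M] [Module R M] [Module.Finite R M] :
    Nonempty ((AdicCompletion I R ⊗[R] M) ≃ₗ[R] AdicCompletion I M) ∧
      Module.Flat R (AdicCompletion I R) := by
  refine ⟨?_, (AdicCompletion.flat_of_isNoetherian (R := R) (I := I))⟩
  -- transport `M` to a module in the same universe as `R`
  obtain ⟨n, f, hf⟩ := Module.Finite.exists_fin' R M
  let M' := (Fin n → R) ⧸ LinearMap.ker f
  let e : M' ≃ₗ[R] M := f.quotKerEquivOfSurjective hf
  have : Module.Finite R M' := Module.Finite.equiv e.symm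
  exact ⟨(LinearEquiv.lTensor (AdicCompletion I R) e.symm).trans <|
    ((AdicCompletion.ofTensorProductEquivOfFiniteNoetherian I M').restrictScalars R).trans <|
    (AdicCompletion.congr I e).restrictScalars R⟩
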